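/- Let {X_t}_{t∈T} be a family of topological spaces such that player I has a winning strategy in the open-open game on each finite subproduct ∏_{t∈F} X_t for finite F ⊆ T. If every nonempty basic open box of the full product ∏_{t∈T} X_t depends on finitely many coordinates, then player I has a winning strategy in the open-open game on ∏_{t∈T} X_t, provided a strategy can be assembled by bookkeeping countably many coordinates; in particular, a countable product of I-favorable spaces is I-favorable. -/

import Mathlib

/-- Player I has a winning strategy in the open-open game on `X`: there is a
function `μ` from finite sequences of player II's moves to nonempty open sets
such that for every play in which player II's moves `B n` are nonempty open
subsets of player I's moves prescribed by `μ`, the union `⋃ n, B n` is dense. -/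
def WinningStrategyI (X : Type*) [TopologicalSpace X] : Prop :=
  ∃ μ : List (Set X) → Set X,
    (∀ l : List (Set X), IsOpen (μ l) ∧ (μ l).Nonempty) ∧
    ∀ B : ℕ → Set X,
      (∀ n, IsOpen (B n) ∧ (B n).Nonempty ∧
        B n ⊆ μ (List.ofFn fun i : Fin n => B i)) →
      Dense (⋃ n, B n)

noncomputable section OOGAux

namespace OOG

open scoped Classical

variable {T : Type*} {X : T → Type*} [∀ t, TopologicalSpace (X t)]

/-- Projection of the full product onto a finite subproduct. -/
def proj (X : T → Type*) (G : Finset T) (x : ∀ t, X t) : ∀ t : G, X t := fun t => x t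

lemma continuous_proj (G : Finset T) : Continuous (proj X G) :=
  continuous_pi fun _ => continuous_apply _

lemma surjective_proj (hne : ∀ t, Nonempty (X t)) (G : Finset T) :
    Function.Surjective (proj X G) := fun y =>
  ⟨fun t => if h : t ∈ G then y ⟨t, h⟩ else (hne t).some, funext fun t => dif_pos t.2⟩

variable (supp : Set (∀ t, X t) → Finset T)
variable (V : Set (∀ t, X t) → ∀ t, Set (X t))

/-- The chosen basic open box inside an open set. -/
def box (B : Set (∀ t, X t)) : Set (∀ t, X t) := (supp B : Set T).pi (V B)

/-- Accumulated supports of a list of moves. -/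
def Sfold : List (Set (∀ t, X t)) → Finset T
  | [] => ∅
  | A :: l => supp A ∪ Sfold l

lemma mem_Sfold {t : T} : ∀ {l : List (Set (∀ t, X t))},
    t ∈ Sfold supp l ↔ ∃ A ∈ l, t ∈ supp A
  | [] => by simp [Sfold]
  | A :: l => by simp [Sfold, mem_Sfold (l := l)]

/-- The auxiliary move of player II in the game on the finite subproduct `G`:
the projection of the chosen box of `B` to `G`. -/
def auxMove (G : Finset T) (B : Set (∀ t, X t)) : Set (∀ t : G, X t) :=
  Set.pi {t : G | (t : T) ∈ supp B} fun t => V B t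

lemma isOpen_auxMove {G : Finset T} {B : Set (∀ t, X t)}
    (hV : ∀ t ∈ supp B, IsOpen (V B t)) : IsOpen (auxMove supp V G B) :=
  isOpen_set_pi (Set.toFinite _) fun t ht => hV t ht

lemma auxMove_nonempty {G : Finset T} {B : Set (∀ t, X t)}
    (hbox : (box supp V B).Nonempty) : (auxMove supp V G B).Nonempty := by
  obtain ⟨z, hz⟩ := hbox
  exact ⟨fun t => z t, fun t ht => hz t ht⟩

lemma auxMove_subset {G : Finset T} {B : Set (∀ t, X t)} {M : Set (∀ t : G, X t)}
    (hbox : (box supp V B).Nonempty) (hsub : box supp V B ⊆ proj X G ⁻¹' M) :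
    auxMove supp V G B ⊆ M := by
  rintro y hy
  obtain ⟨z, hz⟩ := hbox
  have hxbox : (fun t => if h : t ∈ G then y ⟨t, h⟩ else z t) ∈ box supp V B := by
    intro t ht
    by_cases h : t ∈ G
    · simpa [h] using hy ⟨t, h⟩ ht
    · simpa [h] using hz t ht
  have hproj : proj X G (fun t => if h : t ∈ G then y ⟨t, h⟩ else z t) = y := by
    funext t; exact dif_pos t.2
  have h2 : proj X G (fun t => if h : t ∈ G then y ⟨t, h⟩ else z t) ∈ M := hsub hxbox
  rwa [hproj] at h2

variable (μF : ∀ F : Finset T, List (Set (∀ t : F, X t)) → Set (∀ t : F, X t))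

/-- The main strategy on the full product. -/
def mainμ (l : List (Set (∀ t, X t))) : Set (∀ t, X t) :=
  proj X (Sfold supp (l.take (Nat.unpair l.length).1)) ⁻¹'
    μF (Sfold supp (l.take (Nat.unpair l.length).1))
      (((List.range l.length).filter fun j => (Nat.unpair j).1 = (Nat.unpair l.length).1).map
        fun j => auxMove supp V (Sfold supp (l.take (Nat.unpair l.length).1)) (l.getD j ∅))

lemma filter_range_eq (p : ℕ → Prop) [DecidablePred p] :
    ∀ n, (List.range n).filter (fun j => decide (p j)) =
      List.ofFn fun i : Fin (Nat.count p n) => Nat.nth p i := by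
  intro n
  induction n with
  | zero => simp
  | succ n ih =>
    rw [List.range_succ, List.filter_append, ih, Nat.count_succ]
    by_cases h : p n
    · rw [if_pos h, List.ofFn_succ']
      simp only [List.concat_eq_append, Fin.coe_castSucc, Fin.val_last]
      rw [Nat.nth_count h]
      simp [h]
    · rw [if_neg h]
      simp [h]

lemma take_ofFn' {α : Type*} {n k : ℕ} (hk : k ≤ n) (f : Fin n → α) :
    (List.ofFn f).take k = List.ofFn fun i : Fin k => f (Fin.castLE hk i) := by
  apply List.ext_getElem
  · simp [hk]
  · intro i h1 h2
    simp [List.getElem_take]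

end OOG

end OOGAux

/-- If player I has a winning strategy in the open-open game on
every finite subproduct `∏_{t ∈ F} X_t` of a family of spaces, then player I
has a winning strategy in the open-open game on the full product `∏_{t ∈ T} X_t`
(in particular, a countable product of I-favorable spaces is I-favorable). -/
theorem winningStrategyI_product
    {T : Type*} (X : T → Type*) [∀ t, TopologicalSpace (X t)]
    (hfin : ∀ F : Finset T, WinningStrategyI (∀ t : F, X t)) :
    WinningStrategyI (∀ t, X t) := by
  classical
  choose μF hμF hμWin using hfin
  have hne : ∀ t, Nonempty (X t) := by
    intro t
    obtain ⟨y, -⟩ := (hμF {t} []).2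
    exact ⟨y ⟨t, by simp⟩⟩
  -- choice of basic boxes
  have hboxex : ∀ B : Set (∀ t, X t), ∃ (F : Finset T) (W : ∀ t, Set (X t)),
      IsOpen B → B.Nonempty →
        (∀ t ∈ F, IsOpen (W t)) ∧ ((F : Set T).pi W).Nonempty ∧ (F : Set T).pi W ⊆ B := by
    intro B
    by_cases h : IsOpen B ∧ B.Nonempty
    · obtain ⟨hB, x, hx⟩ := h
      obtain ⟨F, W, h1, h2⟩ := (isOpen_pi_iff.mp hB) x hx
      exact ⟨F, W, fun _ _ => ⟨fun t ht => (h1 t ht).1, ⟨x, fun t ht => (h1 t ht).2⟩, h2⟩⟩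
    · exact ⟨∅, fun _ => ∅, fun h1 h2 => absurd ⟨h1, h2⟩ h⟩
  choose supp V hsupp using hboxex
  refine ⟨OOG.mainμ supp V μF, fun l => ?_, ?_⟩
  · unfold OOG.mainμ
    exact ⟨(hμF _ _).1.preimage (OOG.continuous_proj _),
      (hμF _ _).2.preimage (OOG.surjective_proj hne _)⟩
  · intro B hB
    have hboxB : ∀ n, (∀ t ∈ supp (B n), IsOpen (V (B n) t)) ∧
        (OOG.box supp V (B n)).Nonempty ∧ OOG.box supp V (B n) ⊆ B n :=
      fun n => hsupp (B n) (hB n).1 (hB n).2.1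
    -- the games on the finite subproducts
    have key : ∀ k : ℕ,
        Dense (⋃ j, OOG.auxMove supp V (OOG.Sfold supp (List.ofFn fun i : Fin k => B i))
          (B (Nat.nth (fun m => (Nat.unpair m).1 = k) j))) := by
      intro k
      set p : ℕ → Prop := fun m => (Nat.unpair m).1 = k with hp_def
      have hp : {m | p m}.Infinite :=
        Set.infinite_of_injective_forall_mem (f := fun m => Nat.pair k m)
          (fun a b h => by simpa using congrArg (fun x => (Nat.unpair x).2) h)
          (fun m => by simp [hp_def])
      set G : Finset T := OOG.Sfold supp (List.ofFn fun i : Fin k => B i) with hG_def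
      set C : ℕ → Set (∀ t : G, X t) :=
        fun j => OOG.auxMove supp V G (B (Nat.nth p j)) with hC_def
      apply hμWin G C
      intro j
      set n : ℕ := Nat.nth p j with hn_def
      have hpn : p n := Nat.nth_mem_of_infinite hp j
      have hcount : Nat.count p n = j := Nat.count_nth_of_infinite hp j
      have hkn : k ≤ n := hpn ▸ Nat.unpair_left_le n
      refine ⟨OOG.isOpen_auxMove supp V (hboxB n).1, OOG.auxMove_nonempty supp V (hboxB n).2.1, ?_⟩
      -- legality
      have hsub := (hB n).2.2
      have hlen : (List.ofFn fun i : Fin n => B i).length = n := List.length_ofFn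
      have htake : (List.ofFn fun i : Fin n => B i).take k = List.ofFn fun i : Fin k => B i := by
        rw [OOG.take_ofFn' hkn]
        simp
      have hfilter : ((List.range n).filter fun m => decide ((Nat.unpair m).1 = k)) =
          List.ofFn fun i : Fin j => Nat.nth p i := by
        have := OOG.filter_range_eq p n
        rw [hcount] at this
        exact this
      have hhist : (((List.range n).filter fun m => decide ((Nat.unpair m).1 = k)).map
          fun m => OOG.auxMove supp V G ((List.ofFn fun i : Fin n => B i).getD m ∅)) =
          List.ofFn fun i : Fin j => C i := by
        rw [hfilter, List.map_ofFn]
        refine congrArg _ (funext fun i => ?_)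
        have hlt : Nat.nth p i < n := by
          rw [hn_def]
          exact Nat.nth_strictMono hp i.2
        simp only [Function.comp_apply, hC_def]
        rw [List.getD_eq_getElem _ _ (by rw [hlen]; exact hlt)]
        simp
      have hμeq : OOG.mainμ supp V μF (List.ofFn fun i : Fin n => B i) =
          OOG.proj X G ⁻¹' μF G (List.ofFn fun i : Fin j => C i) := by
        unfold OOG.mainμ
        rw [hlen, hpn, htake, ← hG_def, hhist]
      rw [hμeq] at hsub
      exact OOG.auxMove_subset supp V (hboxB n).2.1 ((hboxB n).2.2.trans hsub)
    -- conclude density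
    rw [dense_iff_inter_open]
    intro W hW hWne
    obtain ⟨x₀, hx₀⟩ := hWne
    obtain ⟨F, U, hU, hpiW⟩ := isOpen_pi_iff.mp hW x₀ hx₀
    -- find k such that every coordinate of F touched by some support lies in S_k
    have hFS : ∀ t : T, ∃ kt : ℕ, (∃ m, t ∈ supp (B m)) →
        t ∈ OOG.Sfold supp (List.ofFn fun i : Fin kt => B i) := by
      intro t
      by_cases h : ∃ m, t ∈ supp (B m)
      · obtain ⟨m, hm⟩ := h
        refine ⟨m + 1, fun _ => (OOG.mem_Sfold supp).mpr ⟨B m, ?_, hm⟩⟩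
        rw [List.mem_ofFn]
        exact ⟨⟨m, Nat.lt_succ_self m⟩, rfl⟩
      · exact ⟨0, fun hh => absurd hh h⟩
    choose kf hkf using hFS
    set k : ℕ := F.sup kf with hk_def
    set G : Finset T := OOG.Sfold supp (List.ofFn fun i : Fin k => B i) with hG_def
    have hmono : ∀ {k' : ℕ}, k' ≤ k → ∀ {t : T},
        t ∈ OOG.Sfold supp (List.ofFn fun i : Fin k' => B i) → t ∈ G := by
      intro k' hk' t ht
      rw [OOG.mem_Sfold supp] at ht ⊢
      obtain ⟨A, hA, htA⟩ := ht
      rw [List.mem_ofFn] at hA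
      obtain ⟨i, rfl⟩ := hA
      refine ⟨B i, ?_, htA⟩
      rw [List.mem_ofFn]
      exact ⟨⟨i, lt_of_lt_of_le i.2 hk'⟩, rfl⟩
    have hFG : ∀ t ∈ F, (∃ m, t ∈ supp (B m)) → t ∈ G := fun t ht hm =>
      hmono (Finset.le_sup ht) (hkf t hm)
    -- use density in the finite subproduct G
    set p : ℕ → Prop := fun m => (Nat.unpair m).1 = k with hp_def
    have hO : IsOpen (Set.pi {t : G | (t : T) ∈ F} fun t => U t) :=
      isOpen_set_pi (Set.toFinite _) fun t ht => (hU t ht).1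
    have hOne : (Set.pi {t : G | (t : T) ∈ F} fun t => U t).Nonempty :=
      ⟨fun t => x₀ t, fun t ht => (hU t ht).2⟩
    obtain ⟨y, hyO, hyC⟩ := (key k).inter_open_nonempty _ hO hOne
    rw [Set.mem_iUnion] at hyC
    obtain ⟨j, hyj⟩ := hyC
    set n : ℕ := Nat.nth p j with hn_def
    obtain ⟨z, hz⟩ := (hboxB n).2.1
    set x : ∀ t, X t := fun t =>
      if h : t ∈ G then y ⟨t, h⟩ else if t ∈ supp (B n) then z t else x₀ t with hx_def
    have hxbox : x ∈ OOG.box supp V (B n) := by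
      intro t ht
      by_cases h : t ∈ G
      · simpa [hx_def, h] using hyj ⟨t, h⟩ ht
      · simp only [hx_def, dif_neg h, if_pos (Finset.mem_coe.mp ht)]
        exact hz t ht
    have hxU : x ∈ (F : Set T).pi U := by
      intro t ht
      by_cases h : t ∈ G
      · simpa [hx_def, h] using hyO ⟨t, h⟩ ht
      · have hns : t ∉ supp (B n) := fun hs => h (hFG t ht ⟨n, hs⟩)
        simpa [hx_def, h, hns] using (hU t ht).2
    exact ⟨x, hpiW hxU, Set.mem_iUnion.mpr ⟨n, (hboxB n).2.2 hxbox⟩⟩
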